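/- (Cubic factorization underlying the addition law.) Under the hypotheses of the addition formula — a₀,…,a₄, c, x₁, y₁, x₂, y₂ ∈ ℂ with c² = a₄, y₁² = f(x₁), y₂² = f(x₂), x₁ ≠ x₂, P(x) = b₂x² + b₁x + b₀ the interpolating parabola with b₂ = c, and 2b₁b₂ - a₃ ≠ 0, x₃ = -x₁ - x₂ - (2b₀b₂ + b₁² - a₂)/(2b₁b₂ - a₃) — one has the polynomial identity in ℂ[X]: f(X) - P(X)² = (a₃ - 2b₁b₂)·(X - x₁)(X - x₂)(X - x₃), where f(X) = a₄X⁴ + a₃X³ + a₂X² + a₁X + a₀. -/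

import Mathlib

open Polynomial

/-- Cubic factorization underlying the addition law on a quartic elliptic
curve: with `P` the interpolating parabola through `(x₁,y₁)` and `(x₂,y₂)` with leading
coefficient `c = √a₄`, and `x₃` the chord-addition abscissa, one has the polynomial
identity `f(X) - P(X)² = (a₃ - 2b₁b₂)(X - x₁)(X - x₂)(X - x₃)` in `ℂ[X]`. -/
theorem quartic_elliptic_curve_addition_cubic_factorization
    (a0 a1 a2 a3 a4 c x1 y1 x2 y2 b0 b1 b2 x3 : ℂ)
    (hc : c ^ 2 = a4)
    (h1 : y1 ^ 2 = a4 * x1 ^ 4 + a3 * x1 ^ 3 + a2 * x1 ^ 2 + a1 * x1 + a0)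
    (h2 : y2 ^ 2 = a4 * x2 ^ 4 + a3 * x2 ^ 3 + a2 * x2 ^ 2 + a1 * x2 + a0)
    (hx : x1 ≠ x2)
    (hb2 : b2 = c)
    (hb1 : b1 = -c * (x1 + x2) + (y1 - y2) / (x1 - x2))
    (hb0 : b0 = c * x1 * x2 + (x1 * y2 - x2 * y1) / (x1 - x2))
    (hden : 2 * b1 * b2 - a3 ≠ 0)
    (hx3 : x3 = -x1 - x2 - (2 * b0 * b2 + b1 ^ 2 - a2) / (2 * b1 * b2 - a3)) :
    (C a4 * X ^ 4 + C a3 * X ^ 3 + C a2 * X ^ 2 + C a1 * X + C a0)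
        - (C b2 * X ^ 2 + C b1 * X + C b0) ^ 2
      = C (a3 - 2 * b1 * b2) * (X - C x1) * (X - C x2) * (X - C x3) := by
  have hd : x1 - x2 ≠ 0 := sub_ne_zero.mpr hx
  have e1 : a4 = b2 ^ 2 := by rw [hb2]; exact hc.symm
  have e3 : a2 - b1 ^ 2 - 2 * b0 * b2 = -(a3 - 2 * b1 * b2) * (x1 + x2 + x3) := by
    rw [hx3]
    have hq : (2 * b0 * b2 + b1 ^ 2 - a2) / (2 * b1 * b2 - a3) * (2 * b1 * b2 - a3) = 2 * b0 * b2 + b1 ^ 2 - a2 := div_mul_cancel₀ _ hden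
    linear_combination hq
  have hP1 : b2 * x1 ^ 2 + b1 * x1 + b0 = y1 := by
    rw [hb2, hb1, hb0]
    have hq : y1 * (x1 - x2) / (x1 - x2) = y1 := mul_div_cancel_right₀ y1 hd
    linear_combination hq
  have hP2 : b2 * x2 ^ 2 + b1 * x2 + b0 = y2 := by
    rw [hb2, hb1, hb0]
    have hq : y2 * (x1 - x2) / (x1 - x2) = y2 := mul_div_cancel_right₀ y2 hd
    linear_combination hq
  have g1 : (b2 * x1 ^ 2 + b1 * x1 + b0) ^ 2
      = a4 * x1 ^ 4 + a3 * x1 ^ 3 + a2 * x1 ^ 2 + a1 * x1 + a0 := by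
    rw [hP1]; exact h1
  have g2 : (b2 * x2 ^ 2 + b1 * x2 + b0) ^ 2
      = a4 * x2 ^ 4 + a3 * x2 ^ 3 + a2 * x2 ^ 2 + a1 * x2 + a0 := by
    rw [hP2]; exact h2
  have hA1 : (a1 - 2 * b0 * b1 - (a3 - 2 * b1 * b2) * (x1 * x2 + x1 * x3 + x2 * x3)) * x1
      + (a0 - b0 ^ 2 + (a3 - 2 * b1 * b2) * (x1 * x2 * x3)) = 0 := by
    linear_combination -g1 - x1 ^ 4 * e1 - x1 ^ 2 * e3
  have hA2 : (a1 - 2 * b0 * b1 - (a3 - 2 * b1 * b2) * (x1 * x2 + x1 * x3 + x2 * x3)) * x2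
      + (a0 - b0 ^ 2 + (a3 - 2 * b1 * b2) * (x1 * x2 * x3)) = 0 := by
    linear_combination -g2 - x2 ^ 4 * e1 - x2 ^ 2 * e3
  have hA : a1 - 2 * b0 * b1 - (a3 - 2 * b1 * b2) * (x1 * x2 + x1 * x3 + x2 * x3) = 0 := by
    have h := sub_eq_zero.mpr (hA1.trans hA2.symm)
    have : (a1 - 2 * b0 * b1 - (a3 - 2 * b1 * b2) * (x1 * x2 + x1 * x3 + x2 * x3)) * (x1 - x2) = 0 := by
      linear_combination hA1 - hA2
    exact (mul_eq_zero.mp this).resolve_right hd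
  have hB : a0 - b0 ^ 2 + (a3 - 2 * b1 * b2) * (x1 * x2 * x3) = 0 := by
    linear_combination hA1 - x1 * hA
  apply Polynomial.funext
  intro x
  simp only [eval_add, eval_sub, eval_mul, eval_pow, eval_C, eval_X]
  linear_combination x ^ 4 * e1 + x ^ 2 * e3 + x * hA + hB
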